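/- Let P be an extraspecial group of order p^5 and exponent p with center Z (p odd). If Q ≤ P has order p and Q ∩ Z = 1, then N_P(Q)/Q is extraspecial of order p^3 and exponent p; if Q ≤ P has order p² and Q ∩ Z = 1, then N_P(Q)/Q is cyclic of order p. -/

import Mathlib

/-- A group is extraspecial of order `p ^ 3` and exponent `p`:
it has order `p ^ 3`, its centre has order `p`, and every element has order dividing `p`. -/
def IsExtraspecialP3 (p : ℕ) (X : Type*) [Group X] : Prop :=
  Nat.card X = p ^ 3 ∧ Nat.card (Subgroup.center X) = p ∧ ∀ x : X, x ^ p = 1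

open scoped commutatorElement

section ExtraspecialAux
set_option linter.unusedSectionVars false

open Subgroup

variable {p : ℕ} {P : Type*} [Group P] [Finite P]

private lemma aux_eq_of_le_card {H K : Subgroup P} (h : H ≤ K)
    (hc : Nat.card K ≤ Nat.card H) : H = K := by
  have e : Nat.card (H.subgroupOf K) = Nat.card H :=
    Nat.card_congr (Subgroup.subgroupOfEquivOfLe h).toEquiv
  have h1 : Nat.card H ≤ Nat.card K := Subgroup.card_le_of_le h
  have h2 : Nat.card (H.subgroupOf K) = Nat.card K := by rw [e]; omega
  have h3 := (Subgroup.card_eq_iff_eq_top (H.subgroupOf K)).mp h2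
  exact le_antisymm h (by rwa [Subgroup.subgroupOf_eq_top] at h3)

private lemma aux_card_lt {H K : Subgroup P} (h : H < K) : Nat.card H < Nat.card K := by
  by_contra hc
  push_neg at hc
  exact h.ne (aux_eq_of_le_card h.le hc)

private lemma comm_key_left (hcommZ : ∀ x y : P, ⁅x, y⁆ ∈ Subgroup.center P) (q x y : P) :
    ⁅x * y, q⁆ = ⁅x, q⁆ * ⁅y, q⁆ := by
  have hy := Subgroup.mem_center_iff.mp (hcommZ y q)
  calc ⁅x * y, q⁆ = x * ⁅y, q⁆ * (q * x⁻¹ * q⁻¹) := by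
        simp only [commutatorElement_def]; group
    _ = ⁅y, q⁆ * x * (q * x⁻¹ * q⁻¹) := by rw [hy x]
    _ = ⁅y, q⁆ * ⁅x, q⁆ := by simp only [commutatorElement_def]; group
    _ = ⁅x, q⁆ * ⁅y, q⁆ := (hy _).symm

private lemma comm_key_right (hcommZ : ∀ x y : P, ⁅x, y⁆ ∈ Subgroup.center P) (a x y : P) :
    ⁅a, x * y⁆ = ⁅a, x⁆ * ⁅a, y⁆ := by
  have hy := Subgroup.mem_center_iff.mp (hcommZ a y)
  calc ⁅a, x * y⁆ = a * x * a⁻¹ * ⁅a, y⁆ * x⁻¹ := by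
        simp only [commutatorElement_def]; group
    _ = ⁅a, y⁆ * (a * x * a⁻¹) * x⁻¹ := by rw [hy (a * x * a⁻¹)]
    _ = ⁅a, y⁆ * ⁅a, x⁆ := by simp only [commutatorElement_def]; group
    _ = ⁅a, x⁆ * ⁅a, y⁆ := (hy _).symm

/-- The homomorphism `x ↦ ⁅x, q⁆` into the center. -/
private def commHom (hcommZ : ∀ x y : P, ⁅x, y⁆ ∈ Subgroup.center P) (q : P) :
    P →* Subgroup.center P where
  toFun x := ⟨⁅x, q⁆, hcommZ x q⟩
  map_one' := Subtype.ext (by simp [commutatorElement_def])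
  map_mul' x y := Subtype.ext (comm_key_left hcommZ q x y)

private lemma ker_commHom (hcommZ : ∀ x y : P, ⁅x, y⁆ ∈ Subgroup.center P) (q : P) :
    (commHom hcommZ q).ker = Subgroup.centralizer {q} := by
  ext x
  rw [MonoidHom.mem_ker, Subgroup.mem_centralizer_iff]
  constructor
  · intro h g hg
    rw [Set.mem_singleton_iff] at hg; subst hg
    have h1 : ⁅x, g⁆ = 1 := congrArg Subtype.val h
    exact (commutatorElement_eq_one_iff_mul_comm.mp h1).symm
  · intro h
    exact Subtype.ext (commutatorElement_eq_one_iff_mul_comm.mpr (h q rfl).symm)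

/-- The centralizer of a non-central element in an extraspecial group of order `p ^ 5`
has order `p ^ 4`. -/
private lemma card_centralizer_eq (hp : p.Prime)
    (hcard : Nat.card P = p ^ 5) (hZcard : Nat.card (Subgroup.center P) = p)
    (hcommZ : ∀ x y : P, ⁅x, y⁆ ∈ Subgroup.center P)
    {q : P} (hq : q ∉ Subgroup.center P) :
    Nat.card (Subgroup.centralizer {q} : Subgroup P) = p ^ 4 := by
  set f := commHom hcommZ q with hf
  have hKC : f.ker = Subgroup.centralizer {q} := ker_commHom hcommZ q
  have h1 : Nat.card P = Nat.card (P ⧸ f.ker) * Nat.card f.ker :=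
    Subgroup.card_eq_card_quotient_mul_card_subgroup f.ker
  have h2 : Nat.card (P ⧸ f.ker) = Nat.card f.range :=
    Nat.card_congr (QuotientGroup.quotientKerEquivRange f).toEquiv
  have h3 : Nat.card f.range ∣ p := hZcard ▸ Subgroup.card_subgroup_dvd_card f.range
  have h4 : Nat.card f.range ≠ 1 := by
    intro h1'
    have hbot := Subgroup.eq_bot_of_card_eq _ h1'
    obtain ⟨g, hg⟩ : ∃ g : P, ¬ g * q = q * g := by
      by_contra hall; push_neg at hall
      exact hq (Subgroup.mem_center_iff.mpr hall)
    have hm : f g ∈ f.range := ⟨g, rfl⟩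
    rw [hbot, Subgroup.mem_bot] at hm
    have hm' : ⁅g, q⁆ = (1 : P) := congrArg Subtype.val hm
    exact hg (commutatorElement_eq_one_iff_mul_comm.mp hm')
  have h5 : Nat.card f.range = p := (hp.eq_one_or_self_of_dvd _ h3).resolve_left h4
  rw [hcard, h2, h5] at h1
  have h6 : p * Nat.card f.ker = p * p ^ 4 := by rw [← h1]; ring
  have h7 := Nat.eq_of_mul_eq_mul_left hp.pos h6
  rw [← hKC]
  exact h7

/-- The centralizer of a non-central element is not abelian. -/
private lemma cent_not_comm (hp : p.Prime)
    (hcard : Nat.card P = p ^ 5) (hZcard : Nat.card (Subgroup.center P) = p)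
    (hcommZ : ∀ x y : P, ⁅x, y⁆ ∈ Subgroup.center P)
    {q : P} (hq : q ∉ Subgroup.center P)
    (hab : ∀ a b : ↥(Subgroup.centralizer {q} : Subgroup P), (a : P) * b = b * a) : False := by
  set C := Subgroup.centralizer {q} with hCdef
  have hC4 : Nat.card C = p ^ 4 := card_centralizer_eq hp hcard hZcard hcommZ hq
  have hp2 := hp.two_le
  have hCne : C ≠ ⊤ := by
    intro h
    rw [h, Subgroup.card_top, hcard] at hC4
    have := Nat.pow_right_injective hp2 hC4
    omega
  obtain ⟨a, ha⟩ : ∃ a : P, a ∉ C := by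
    by_contra hall; push_neg at hall
    exact hCne ((Subgroup.eq_top_iff' C).mpr hall)
  set g : ↥C →* Subgroup.center P := {
    toFun := fun y => ⟨⁅a, (y : P)⁆, hcommZ a y⟩
    map_one' := Subtype.ext (by simp [commutatorElement_def])
    map_mul' := fun y1 y2 => Subtype.ext (by
      simp only [Subgroup.coe_mul]
      exact comm_key_right hcommZ a y1 y2) } with hg
  have h1 : Nat.card ↥C = Nat.card (↥C ⧸ g.ker) * Nat.card g.ker :=
    Subgroup.card_eq_card_quotient_mul_card_subgroup g.ker
  have h2 : Nat.card (↥C ⧸ g.ker) = Nat.card g.range :=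
    Nat.card_congr (QuotientGroup.quotientKerEquivRange g).toEquiv
  have h3 : Nat.card g.range ∣ p := hZcard ▸ Subgroup.card_subgroup_dvd_card g.range
  have hrle : Nat.card g.range ≤ p := Nat.le_of_dvd hp.pos h3
  have h5 : p ^ 3 ≤ Nat.card g.ker := by
    have hck : p ^ 4 ≤ p * Nat.card g.ker := by
      calc p ^ 4 = Nat.card ↥C := hC4.symm
        _ = Nat.card (↥C ⧸ g.ker) * Nat.card g.ker := h1
        _ = Nat.card g.range * Nat.card g.ker := by rw [h2]
        _ ≤ p * Nat.card g.ker := Nat.mul_le_mul_right _ hrle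
    have h6 : p * p ^ 3 ≤ p * Nat.card g.ker := by
      calc p * p ^ 3 = p ^ 4 := by ring
        _ ≤ _ := hck
    exact Nat.le_of_mul_le_mul_left h6 hp.pos
  obtain ⟨m, hmker, hmZ⟩ : ∃ m : ↥C, m ∈ g.ker ∧ (m : P) ∉ Subgroup.center P := by
    by_contra hcon; push_neg at hcon
    have hle : g.ker ≤ (Subgroup.center P).subgroupOf C :=
      fun m hm => Subgroup.mem_subgroupOf.mpr (hcon m hm)
    have hcZ : Nat.card ((Subgroup.center P).subgroupOf C) = p := by
      rw [Nat.card_congr (Subgroup.subgroupOfEquivOfLe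
        (Subgroup.center_le_centralizer ({q} : Set P))).toEquiv, hZcard]
    have hle2 : Nat.card g.ker ≤ p := hcZ ▸ Subgroup.card_le_of_le hle
    have h8 : p ^ 3 ≤ p := le_trans h5 hle2
    have h9 : p ^ 3 ≤ p ^ 1 := by rwa [pow_one]
    have := (Nat.pow_le_pow_iff_right hp.one_lt).mp h9
    omega
  have hCm : C ≤ Subgroup.centralizer {(m : P)} := by
    intro y hy
    rw [Subgroup.mem_centralizer_iff]
    intro h hh; rw [Set.mem_singleton_iff] at hh; subst hh
    exact (hab ⟨y, hy⟩ m).symm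
  have hcm4 : Nat.card (Subgroup.centralizer {(m : P)} : Subgroup P) = p ^ 4 :=
    card_centralizer_eq hp hcard hZcard hcommZ hmZ
  have hCeq : C = Subgroup.centralizer {(m : P)} :=
    aux_eq_of_le_card hCm (by rw [hcm4, hC4])
  have haC : a ∈ C := by
    rw [hCeq, Subgroup.mem_centralizer_iff]
    intro h hh; rw [Set.mem_singleton_iff] at hh; subst hh
    have h1' : ⁅a, (m : P)⁆ = 1 := congrArg Subtype.val hmker
    exact (commutatorElement_eq_one_iff_mul_comm.mp h1').symm
  exact ha haC

/-- The center of the centralizer of a non-central element has order `p ^ 2`. -/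
private lemma card_center_centralizer (hp : p.Prime)
    (hcard : Nat.card P = p ^ 5) (hZcard : Nat.card (Subgroup.center P) = p)
    (hcommZ : ∀ x y : P, ⁅x, y⁆ ∈ Subgroup.center P)
    {q : P} (hq : q ∉ Subgroup.center P) :
    Nat.card (Subgroup.center ↥(Subgroup.centralizer {q} : Subgroup P)) = p ^ 2 := by
  haveI : Fact p.Prime := ⟨hp⟩
  set C := Subgroup.centralizer {q} with hCdef
  have hC4 : Nat.card C = p ^ 4 := card_centralizer_eq hp hcard hZcard hcommZ hq
  set K := Subgroup.center ↥C with hKdef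
  have hdvd : Nat.card K ∣ p ^ 4 := hC4 ▸ Subgroup.card_subgroup_dvd_card K
  obtain ⟨k, hk4, hkcard⟩ := (Nat.dvd_prime_pow hp).mp hdvd
  have hk2 : k ≤ 2 := by
    by_contra hk
    push_neg at hk
    have h1 : Nat.card ↥C = Nat.card (↥C ⧸ K) * Nat.card K :=
      Subgroup.card_eq_card_quotient_mul_card_subgroup K
    have hcq : Nat.card (↥C ⧸ K) * p ^ k = p ^ 4 := by rw [← hkcard, ← h1, hC4]
    have hq4 : Nat.card (↥C ⧸ K) = p ^ (4 - k) := by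
      have h2 : p ^ (4 - k) * p ^ k = p ^ 4 := by rw [← pow_add]; congr 1; omega
      exact Nat.eq_of_mul_eq_mul_right (pow_pos hp.pos k) (hcq.trans h2.symm)
    have hcyc : IsCyclic (↥C ⧸ K) := by
      rcases Nat.lt_or_ge k 4 with h | h
      · have he : 4 - k = 1 := by omega
        rw [he, pow_one] at hq4
        exact isCyclic_of_prime_card hq4
      · have he : 4 - k = 0 := by omega
        rw [he, pow_zero] at hq4
        haveI := (Nat.card_eq_one_iff_unique.mp hq4).1
        infer_instance
    have hcomm : ∀ a b : ↥C, (a : P) * b = b * a := by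
      intro a b
      have h3 := commutative_of_cyclic_center_quotient (QuotientGroup.mk' K)
        (QuotientGroup.ker_mk' K).le a b
      exact congrArg Subtype.val h3
    exact cent_not_comm hp hcard hZcard hcommZ hq hcomm
  have hqC : q ∈ C := by
    rw [hCdef, Subgroup.mem_centralizer_iff]
    intro h hh; rw [Set.mem_singleton_iff] at hh; subst hh; rfl
  have hq'K : (⟨q, hqC⟩ : ↥C) ∈ K := by
    rw [Subgroup.mem_center_iff]
    intro y
    exact Subtype.ext ((Subgroup.mem_centralizer_iff.mp y.2) q rfl).symm
  have hZle : (Subgroup.center P).subgroupOf C ≤ K := by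
    intro z hz
    rw [Subgroup.mem_center_iff]
    intro y
    exact Subtype.ext (Subgroup.mem_center_iff.mp (Subgroup.mem_subgroupOf.mp hz) y)
  have hq'Z : (⟨q, hqC⟩ : ↥C) ∉ (Subgroup.center P).subgroupOf C :=
    fun h => hq (Subgroup.mem_subgroupOf.mp h)
  set S := (Subgroup.center P).subgroupOf C ⊔ Subgroup.zpowers (⟨q, hqC⟩ : ↥C) with hS
  have hlt : (Subgroup.center P).subgroupOf C < S :=
    lt_of_le_of_ne le_sup_left (fun h => hq'Z (by
      rw [h]; exact Subgroup.mem_sup_right (Subgroup.mem_zpowers _)))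
  have hsupK : S ≤ K := sup_le hZle (Subgroup.zpowers_le.mpr hq'K)
  have hZcard' : Nat.card ((Subgroup.center P).subgroupOf C) = p := by
    rw [Nat.card_congr (Subgroup.subgroupOfEquivOfLe
      (Subgroup.center_le_centralizer ({q} : Set P))).toEquiv, hZcard]
  have hsupdvd : Nat.card S ∣ p ^ 4 := hC4 ▸ Subgroup.card_subgroup_dvd_card S
  obtain ⟨j, hj4, hjcard⟩ := (Nat.dvd_prime_pow hp).mp hsupdvd
  have hplt : p < Nat.card S := hZcard' ▸ aux_card_lt hlt
  have hj2 : 2 ≤ j := by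
    by_contra hj; push_neg at hj
    have hle1 : Nat.card S ≤ p := by
      rw [hjcard]
      calc p ^ j ≤ p ^ 1 := Nat.pow_le_pow_right hp.pos (by omega)
        _ = p := pow_one p
    omega
  have hKge : p ^ 2 ≤ Nat.card K := by
    calc p ^ 2 ≤ p ^ j := Nat.pow_le_pow_right hp.pos hj2
      _ = Nat.card S := hjcard.symm
      _ ≤ Nat.card K := Subgroup.card_le_of_le hsupK
  have hk2' : 2 ≤ k := by
    rw [hkcard] at hKge
    exact (Nat.pow_le_pow_iff_right hp.one_lt).mp hKge
  rw [hkcard, show k = 2 by omega]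

/-- If `Q ∩ Z(P) = 1` and commutators are central, the normalizer of `Q` equals its
centralizer. -/
private lemma normalizer_eq_centralizer
    (hcommZ : ∀ x y : P, ⁅x, y⁆ ∈ Subgroup.center P)
    {Q : Subgroup P} (hQZ : Q ⊓ Subgroup.center P = ⊥) :
    (Subgroup.normalizer (Q : Set P)) = Subgroup.centralizer (Q : Set P) := by
  have hbot : ∀ x : P, x ∈ Q → x ∈ Subgroup.center P → x = 1 := by
    intro x h1 h2
    exact Subgroup.mem_bot.mp (hQZ ▸ Subgroup.mem_inf.mpr ⟨h1, h2⟩)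
  ext x
  constructor
  · intro hx
    rw [Subgroup.mem_centralizer_iff]
    intro h hh
    have hh' : h ∈ Q := hh
    have h1 : x * h * x⁻¹ ∈ Q := (Subgroup.mem_normalizer_iff.mp hx h).mp hh'
    have h2 : x * h * x⁻¹ * h⁻¹ ∈ Q := Q.mul_mem h1 (Q.inv_mem hh')
    have h3 : x * h * x⁻¹ * h⁻¹ ∈ Subgroup.center P := by
      have := hcommZ x h; rwa [commutatorElement_def] at this
    have h4 := hbot _ h2 h3
    have h5 : x * h = h * x := commutatorElement_eq_one_iff_mul_comm.mp
      (by rw [commutatorElement_def]; exact h4)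
    exact h5.symm
  · intro hx
    rw [Subgroup.mem_centralizer_iff] at hx
    rw [Subgroup.mem_normalizer_iff]
    intro h
    constructor
    · intro hh
      have h2 : x * h * x⁻¹ = h := by rw [show x * h = h * x from (hx h hh).symm]; group
      rwa [h2]
    · intro hh
      have h2 := hx _ hh
      have h4 : x * h = x * (x * h * x⁻¹) := by rw [← h2]; group
      have h3 : h = x * h * x⁻¹ := mul_left_cancel h4
      rw [h3]; exact hh

private lemma centralizer_zpowers_eq {q : P} :
    Subgroup.centralizer ((Subgroup.zpowers q : Subgroup P) : Set P)
      = Subgroup.centralizer {q} := by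
  apply le_antisymm
  · exact Subgroup.centralizer_le (Set.singleton_subset_iff.mpr (Subgroup.mem_zpowers q))
  · intro x hx
    rw [Subgroup.mem_centralizer_iff] at hx ⊢
    intro h hh
    have hc : Commute q x := hx q rfl
    obtain ⟨k, rfl⟩ := Subgroup.mem_zpowers_iff.mp hh
    exact (hc.zpow_left k).eq

private lemma exists_zpowers_eq (hp : p.Prime) {Q : Subgroup P} (hQ : Nat.card Q = p) :
    ∃ q : P, q ∈ Q ∧ Q = Subgroup.zpowers q := by
  haveI : Fact p.Prime := ⟨hp⟩
  haveI : IsCyclic ↥Q := isCyclic_of_prime_card hQ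
  obtain ⟨g, hg⟩ := IsCyclic.exists_generator (α := ↥Q)
  refine ⟨(g : P), g.2, le_antisymm ?_ (Subgroup.zpowers_le.mpr g.2)⟩
  intro x hx
  obtain ⟨k, hk⟩ := Subgroup.mem_zpowers_iff.mp (hg ⟨x, hx⟩)
  refine Subgroup.mem_zpowers_iff.mpr ⟨k, ?_⟩
  have := congrArg Subtype.val hk
  simpa using this

private lemma map_subgroupOf_eq {Q N C : Subgroup P} (h : N = C) :
    (Q.subgroupOf N).map (MulEquiv.subgroupCongr h : ↥N →* ↥C) = Q.subgroupOf C := by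
  ext x
  rw [Subgroup.mem_map]
  constructor
  · rintro ⟨y, hy, rfl⟩
    rw [Subgroup.mem_subgroupOf] at hy
    rw [Subgroup.mem_subgroupOf]
    show ((MulEquiv.subgroupCongr h) y : P) ∈ Q
    rw [MulEquiv.subgroupCongr_apply]
    exact hy
  · intro hx
    have hxN : (x : P) ∈ N := by rw [h]; exact x.2
    refine ⟨⟨(x : P), hxN⟩, ?_, ?_⟩
    · rw [Subgroup.mem_subgroupOf]
      exact Subgroup.mem_subgroupOf.mp hx
    · apply Subtype.ext
      show ((MulEquiv.subgroupCongr h) _ : P) = (x : P)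
      rw [MulEquiv.subgroupCongr_apply]

end ExtraspecialAux

/-- Let `P` be extraspecial of order `p^5` and exponent `p` (`p` odd) with
centre `Z`. If `Q ≤ P` has order `p` and `Q ∩ Z = 1`, then `N_P(Q)/Q` is extraspecial of
order `p^3` and exponent `p`; if `Q` has order `p²` and `Q ∩ Z = 1`, then `N_P(Q)/Q` is
cyclic of order `p`. -/
theorem normalizer_quotient_structure {p : ℕ} (hp : p.Prime) (hodd : Odd p)
    (P : Type*) [Group P] [Finite P]
    (hcard : Nat.card P = p ^ 5) (hZcard : Nat.card (Subgroup.center P) = p)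
    (hexp : ∀ g : P, g ^ p = 1)
    (hcommZ : ∀ x y : P, ⁅x, y⁆ ∈ Subgroup.center P)
    (Q : Subgroup P) (hQZ : Q ⊓ Subgroup.center P = ⊥) :
    (Nat.card Q = p →
      IsExtraspecialP3 p (↥(Subgroup.normalizer (Q : Set P)) ⧸ Q.subgroupOf (Subgroup.normalizer (Q : Set P)))) ∧
    (Nat.card Q = p ^ 2 →
      IsCyclic (↥(Subgroup.normalizer (Q : Set P)) ⧸ Q.subgroupOf (Subgroup.normalizer (Q : Set P))) ∧
        Nat.card (↥(Subgroup.normalizer (Q : Set P)) ⧸ Q.subgroupOf (Subgroup.normalizer (Q : Set P))) = p) := by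
  haveI : Fact p.Prime := ⟨hp⟩
  have hbot : ∀ x : P, x ∈ Q → x ∈ Subgroup.center P → x = 1 := by
    intro x h1 h2
    exact Subgroup.mem_bot.mp (hQZ ▸ Subgroup.mem_inf.mpr ⟨h1, h2⟩)
  constructor
  · -- Case |Q| = p
    intro hQp
    obtain ⟨q, hqQ, hQeq⟩ := exists_zpowers_eq hp hQp
    have hq1 : q ≠ 1 := by
      intro h
      rw [h] at hQeq
      have hcard1 : Nat.card Q = 1 := by
        rw [hQeq]
        simp [Subgroup.zpowers_one_eq_bot]
      rw [hQp] at hcard1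
      exact hp.one_lt.ne' hcard1
    have hqZ : q ∉ Subgroup.center P := fun h => hq1 (hbot q hqQ h)
    have hNC : (Subgroup.normalizer (Q : Set P)) = Subgroup.centralizer {q} := by
      rw [normalizer_eq_centralizer hcommZ hQZ, hQeq, centralizer_zpowers_eq]
    set C := Subgroup.centralizer {q} with hCdef
    have hC4 : Nat.card C = p ^ 4 := card_centralizer_eq hp hcard hZcard hcommZ hqZ
    have hqC : q ∈ C := by
      rw [hCdef, Subgroup.mem_centralizer_iff]
      intro h hh; rw [Set.mem_singleton_iff] at hh; subst hh; rfl
    have hQC : Q ≤ C := by rw [hQeq]; exact Subgroup.zpowers_le.mpr hqC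
    set Q' := Q.subgroupOf C with hQ'def
    have hQ'card : Nat.card Q' = p := by
      rw [Nat.card_congr (Subgroup.subgroupOfEquivOfLe hQC).toEquiv, hQp]
    have hQ'le : Q' ≤ Subgroup.center ↥C := by
      intro x hx
      rw [Subgroup.mem_center_iff]
      intro y
      apply Subtype.ext
      have hxQ : (x : P) ∈ Subgroup.zpowers q := by
        rw [← hQeq]; exact Subgroup.mem_subgroupOf.mp hx
      obtain ⟨k, hk⟩ := Subgroup.mem_zpowers_iff.mp hxQ
      have hc : Commute q (y : P) := (Subgroup.mem_centralizer_iff.mp y.2) q rfl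
      have h2 := ((hc.zpow_left k).symm).eq
      show (y : P) * (x : P) = (x : P) * (y : P)
      rw [← hk]
      exact h2
    haveI hQ'n : Q'.Normal := by
      constructor
      intro n hn g
      have hc := Subgroup.mem_center_iff.mp (hQ'le hn) g
      have h2 : g * n * g⁻¹ = n := by rw [hc, mul_inv_cancel_right]
      rwa [h2]
    have hequiv : (↥(Subgroup.normalizer (Q : Set P)) ⧸ Q.subgroupOf (Subgroup.normalizer (Q : Set P))) ≃* (↥C ⧸ Q') :=
      QuotientGroup.congr _ _ (MulEquiv.subgroupCongr hNC) (map_subgroupOf_eq hNC)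
    have h1 : Nat.card ↥C = Nat.card (↥C ⧸ Q') * Nat.card Q' :=
      Subgroup.card_eq_card_quotient_mul_card_subgroup Q'
    have hquot : Nat.card (↥C ⧸ Q') = p ^ 3 := by
      have h2 : Nat.card (↥C ⧸ Q') * p = p ^ 3 * p := by
        calc Nat.card (↥C ⧸ Q') * p = Nat.card (↥C ⧸ Q') * Nat.card Q' := by rw [hQ'card]
          _ = Nat.card ↥C := h1.symm
          _ = p ^ 4 := hC4
          _ = p ^ 3 * p := by ring
      exact Nat.eq_of_mul_eq_mul_right hp.pos h2
    have hexpQ : ∀ x : ↥C ⧸ Q', x ^ p = 1 := by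
      intro x
      obtain ⟨g, rfl⟩ := QuotientGroup.mk'_surjective Q' x
      rw [← map_pow]
      have hg : g ^ p = 1 := by
        apply Subtype.ext
        push_cast
        exact hexp _
      rw [hg, map_one]
    have hKcard : Nat.card (Subgroup.center ↥C) = p ^ 2 :=
      card_center_centralizer hp hcard hZcard hcommZ hqZ
    have hcentereq : Subgroup.center (↥C ⧸ Q')
        = Subgroup.map (QuotientGroup.mk' Q') (Subgroup.center ↥C) := by
      apply le_antisymm
      · intro x hx
        obtain ⟨g, rfl⟩ := QuotientGroup.mk'_surjective Q' x
        refine Subgroup.mem_map.mpr ⟨g, ?_, rfl⟩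
        rw [Subgroup.mem_center_iff]
        intro y
        have hc := Subgroup.mem_center_iff.mp hx (QuotientGroup.mk' Q' y)
        have hxy : QuotientGroup.mk' Q' (g * y * g⁻¹ * y⁻¹) = 1 := by
          rw [map_mul, map_mul, map_mul, map_inv, map_inv, ← hc]
          group
        have hker : g * y * g⁻¹ * y⁻¹ ∈ Q' := by
          rwa [← QuotientGroup.ker_mk' Q', MonoidHom.mem_ker]
        have hPmem : ((g * y * g⁻¹ * y⁻¹ : ↥C) : P) ∈ Q := Subgroup.mem_subgroupOf.mp hker
        have hPcen : ((g * y * g⁻¹ * y⁻¹ : ↥C) : P) ∈ Subgroup.center P := by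
          have h3 := hcommZ (g : P) (y : P)
          rw [commutatorElement_def] at h3
          have hco : ((g * y * g⁻¹ * y⁻¹ : ↥C) : P)
              = (g : P) * (y : P) * (g : P)⁻¹ * (y : P)⁻¹ := by push_cast; rfl
          rwa [hco]
        have h4 := hbot _ hPmem hPcen
        have h5 : (g * y * g⁻¹ * y⁻¹ : ↥C) = 1 := Subtype.ext (by simpa using h4)
        have h6 : (g : ↥C) * y = y * g := commutatorElement_eq_one_iff_mul_comm.mp
          (show ⁅(g : ↥C), y⁆ = 1 by rw [commutatorElement_def]; exact h5)
        exact h6.symm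
      · rintro x ⟨g, hg, rfl⟩
        rw [Subgroup.mem_center_iff]
        intro z
        obtain ⟨y, rfl⟩ := QuotientGroup.mk'_surjective Q' z
        rw [← map_mul, ← map_mul, Subgroup.mem_center_iff.mp hg y]
    have hcmap : Nat.card (Subgroup.map (QuotientGroup.mk' Q') (Subgroup.center ↥C)) = p := by
      set ψ := (QuotientGroup.mk' Q').comp (Subgroup.center ↥C).subtype with hψ
      have hrange : ψ.range = Subgroup.map (QuotientGroup.mk' Q') (Subgroup.center ↥C) := by
        rw [hψ, MonoidHom.range_comp, Subgroup.range_subtype]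
      have hkerψ : ψ.ker = Q'.subgroupOf (Subgroup.center ↥C) := by
        ext t
        rw [MonoidHom.mem_ker, Subgroup.mem_subgroupOf]
        show QuotientGroup.mk' Q' ((Subgroup.center ↥C).subtype t) = 1 ↔ _
        rw [← MonoidHom.mem_ker, QuotientGroup.ker_mk']
        rfl
      have h2 : Nat.card (Subgroup.center ↥C)
          = Nat.card (↥(Subgroup.center ↥C) ⧸ ψ.ker) * Nat.card ψ.ker :=
        Subgroup.card_eq_card_quotient_mul_card_subgroup ψ.ker
      have h3 : Nat.card (↥(Subgroup.center ↥C) ⧸ ψ.ker) = Nat.card ψ.range :=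
        Nat.card_congr (QuotientGroup.quotientKerEquivRange ψ).toEquiv
      have h4 : Nat.card ψ.ker = p := by
        rw [hkerψ, Nat.card_congr (Subgroup.subgroupOfEquivOfLe hQ'le).toEquiv, hQ'card]
      rw [hKcard, h3, h4, hrange] at h2
      have h5 : Nat.card (Subgroup.map (QuotientGroup.mk' Q') (Subgroup.center ↥C)) * p
          = p * p := by rw [← h2]; ring
      exact Nat.eq_of_mul_eq_mul_right hp.pos h5
    have hcenterQ : Nat.card (Subgroup.center (↥C ⧸ Q')) = p := by
      rw [hcentereq]; exact hcmap
    -- transport along the equivalence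
    refine ⟨?_, ?_, ?_⟩
    · rw [Nat.card_congr hequiv.toEquiv, hquot]
    · have hmem : ∀ x : ↥(Subgroup.normalizer (Q : Set P)) ⧸ Q.subgroupOf (Subgroup.normalizer (Q : Set P)),
          x ∈ Subgroup.center _ ↔ hequiv x ∈ Subgroup.center (↥C ⧸ Q') := by
        intro x
        simp only [Subgroup.mem_center_iff]
        constructor
        · intro h g
          obtain ⟨g', rfl⟩ := hequiv.surjective g
          rw [← map_mul, h g', map_mul]
        · intro h g
          apply hequiv.injective
          rw [map_mul, map_mul, h (hequiv g)]
      rw [Nat.card_congr (Equiv.subtypeEquiv hequiv.toEquiv hmem)]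
      exact hcenterQ
    · intro x
      apply hequiv.injective
      rw [map_pow, map_one, hexpQ (hequiv x)]
  · -- Case |Q| = p ^ 2
    intro hQp2
    have hQab : ∀ a b : ↥Q, a * b = b * a :=
      IsPGroup.commutative_of_card_eq_prime_sq hQp2
    obtain ⟨q1, hq1Q, hq1ne⟩ : ∃ x, x ∈ Q ∧ x ≠ 1 := by
      by_contra h; push_neg at h
      have hQb : Q = ⊥ := le_antisymm (fun x hx => Subgroup.mem_bot.mpr (h x hx)) bot_le
      rw [hQb, Subgroup.card_bot] at hQp2
      have := hp.two_le
      nlinarith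
    have horder : orderOf q1 = p := by
      have h1 : orderOf q1 ∣ p := orderOf_dvd_of_pow_eq_one (hexp q1)
      rcases hp.eq_one_or_self_of_dvd _ h1 with h | h
      · exact absurd (orderOf_eq_one_iff.mp h) hq1ne
      · exact h
    obtain ⟨q2, hq2Q, hq2pow⟩ : ∃ x, x ∈ Q ∧ x ∉ Subgroup.zpowers q1 := by
      by_contra h; push_neg at h
      have hle : Q ≤ Subgroup.zpowers q1 := h
      have h2 : Nat.card Q ≤ Nat.card (Subgroup.zpowers q1) := Subgroup.card_le_of_le hle
      rw [hQp2, Nat.card_zpowers, horder] at h2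
      have := hp.two_le
      nlinarith
    have hq2ne : q2 ≠ 1 := fun h => hq2pow (h ▸ Subgroup.one_mem _)
    have hq1Z : q1 ∉ Subgroup.center P := fun h => hq1ne (hbot _ hq1Q h)
    have hq2Z : q2 ∉ Subgroup.center P := fun h => hq2ne (hbot _ hq2Q h)
    have hcomm12 : q1 * q2 = q2 * q1 := congrArg Subtype.val (hQab ⟨q1, hq1Q⟩ ⟨q2, hq2Q⟩)
    set C1 := Subgroup.centralizer {q1} with hC1
    have hC14 : Nat.card C1 = p ^ 4 := card_centralizer_eq hp hcard hZcard hcommZ hq1Z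
    have hK1 : Nat.card (Subgroup.center ↥C1) = p ^ 2 :=
      card_center_centralizer hp hcard hZcard hcommZ hq1Z
    have hq2C1 : q2 ∈ C1 := by
      rw [hC1, Subgroup.mem_centralizer_iff]
      intro h hh; rw [Set.mem_singleton_iff] at hh; subst hh; exact hcomm12
    have hq1C1 : q1 ∈ C1 := by
      rw [hC1, Subgroup.mem_centralizer_iff]
      intro h hh; rw [Set.mem_singleton_iff] at hh; subst hh; rfl
    have hnotle : ¬ C1 ≤ Subgroup.centralizer {q2} := by
      intro hle
      have hq2K : (⟨q2, hq2C1⟩ : ↥C1) ∈ Subgroup.center ↥C1 := by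
        rw [Subgroup.mem_center_iff]
        intro y
        exact Subtype.ext ((Subgroup.mem_centralizer_iff.mp (hle y.2)) q2 rfl).symm
      have hq1K : (⟨q1, hq1C1⟩ : ↥C1) ∈ Subgroup.center ↥C1 := by
        rw [Subgroup.mem_center_iff]
        intro y
        exact Subtype.ext ((Subgroup.mem_centralizer_iff.mp y.2) q1 rfl).symm
      have hZle : (Subgroup.center P).subgroupOf C1 ≤ Subgroup.center ↥C1 := by
        intro z hz
        rw [Subgroup.mem_center_iff]
        intro y
        exact Subtype.ext (Subgroup.mem_center_iff.mp (Subgroup.mem_subgroupOf.mp hz) y)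
      set A := (Subgroup.center P).subgroupOf C1 ⊔ Subgroup.zpowers (⟨q1, hq1C1⟩ : ↥C1)
        with hA
      set B := A ⊔ Subgroup.zpowers (⟨q2, hq2C1⟩ : ↥C1) with hB
      have hq1notZ' : (⟨q1, hq1C1⟩ : ↥C1) ∉ (Subgroup.center P).subgroupOf C1 :=
        fun h => hq1Z (Subgroup.mem_subgroupOf.mp h)
      have hltA : (Subgroup.center P).subgroupOf C1 < A :=
        lt_of_le_of_ne le_sup_left (fun h => hq1notZ' (by
          rw [h]; exact Subgroup.mem_sup_right (Subgroup.mem_zpowers _)))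
      have hq2notA : (⟨q2, hq2C1⟩ : ↥C1) ∉ A := by
        intro hmem
        haveI hZn : ((Subgroup.center P).subgroupOf C1).Normal := by
          constructor
          intro n hn g
          have hc := Subgroup.mem_center_iff.mp (hZle hn) g
          have h2 : g * n * g⁻¹ = n := by rw [hc, mul_inv_cancel_right]
          rwa [h2]
        rw [hA, sup_comm] at hmem
        have hmem' : (⟨q2, hq2C1⟩ : ↥C1) ∈
            ((Subgroup.zpowers (⟨q1, hq1C1⟩ : ↥C1) ⊔
              (Subgroup.center P).subgroupOf C1 : Subgroup ↥C1) : Set ↥C1) := hmem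
        rw [Subgroup.mul_normal] at hmem'
        obtain ⟨w, hw, z, hz, hwz⟩ := hmem'
        obtain ⟨k, hk⟩ := Subgroup.mem_zpowers_iff.mp hw
        have hwP : (w : P) ∈ Subgroup.zpowers q1 := ⟨k, by
          have := congrArg Subtype.val hk
          simpa using this⟩
        have hzP : (z : P) ∈ Subgroup.center P := Subgroup.mem_subgroupOf.mp hz
        have hq2eq : q2 = (w : P) * (z : P) := by
          have := congrArg Subtype.val hwz
          simpa using this.symm
        have hwQ : (w : P) ∈ Q := by
          obtain ⟨k', hk'⟩ := hwP
          rw [← hk']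
          exact Subgroup.zpow_mem Q hq1Q k'
        have hzQ : (z : P) ∈ Q := by
          have hz' : (z : P) = (w : P)⁻¹ * q2 := by rw [hq2eq]; group
          rw [hz']
          exact Q.mul_mem (Q.inv_mem hwQ) hq2Q
        have hz1 : (z : P) = 1 := hbot _ hzQ hzP
        have hq2w : q2 = (w : P) := by rw [hq2eq, hz1, mul_one]
        exact hq2pow (hq2w ▸ hwP)
      have hltB : A < B :=
        lt_of_le_of_ne le_sup_left (fun h => hq2notA (by
          rw [h]; exact Subgroup.mem_sup_right (Subgroup.mem_zpowers _)))
      have hBK : B ≤ Subgroup.center ↥C1 :=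
        sup_le (sup_le hZle (Subgroup.zpowers_le.mpr hq1K)) (Subgroup.zpowers_le.mpr hq2K)
      have hZcard' : Nat.card ((Subgroup.center P).subgroupOf C1) = p := by
        rw [Nat.card_congr (Subgroup.subgroupOfEquivOfLe
          (Subgroup.center_le_centralizer ({q1} : Set P))).toEquiv, hZcard]
      have hAdvd : Nat.card A ∣ p ^ 4 := hC14 ▸ Subgroup.card_subgroup_dvd_card A
      obtain ⟨j, hj4, hjA⟩ := (Nat.dvd_prime_pow hp).mp hAdvd
      have hpA : p < Nat.card A := hZcard' ▸ aux_card_lt hltA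
      have hj2 : 2 ≤ j := by
        by_contra h; push_neg at h
        have hle1 : Nat.card A ≤ p := by
          rw [hjA]
          calc p ^ j ≤ p ^ 1 := Nat.pow_le_pow_right hp.pos (by omega)
            _ = p := pow_one p
        omega
      have hAB : Nat.card A < Nat.card B := aux_card_lt hltB
      have hBle : Nat.card B ≤ p ^ 2 := hK1 ▸ Subgroup.card_le_of_le hBK
      have hA2 : p ^ 2 ≤ Nat.card A := by
        rw [hjA]; exact Nat.pow_le_pow_right hp.pos hj2
      omega
    obtain ⟨y, hyC1, hyq2⟩ := SetLike.not_le_iff_exists.mp hnotle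
    set N0 := C1 ⊓ Subgroup.centralizer {q2} with hN0
    set g2 : ↥C1 →* Subgroup.center P := {
      toFun := fun y => ⟨⁅(y : P), q2⁆, hcommZ _ _⟩
      map_one' := Subtype.ext (by simp [commutatorElement_def])
      map_mul' := fun y1 y2 => Subtype.ext (by
        simp only [Subgroup.coe_mul]
        exact comm_key_left hcommZ q2 y1 y2) } with hg2
    have hker2 : g2.ker = N0.subgroupOf C1 := by
      ext x
      rw [MonoidHom.mem_ker, Subgroup.mem_subgroupOf, hN0, Subgroup.mem_inf]
      constructor
      · intro h
        have h1 : ⁅(x : P), q2⁆ = 1 := congrArg Subtype.val h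
        refine ⟨x.2, ?_⟩
        rw [Subgroup.mem_centralizer_iff]
        intro h' hh'; rw [Set.mem_singleton_iff] at hh'; subst hh'
        exact (commutatorElement_eq_one_iff_mul_comm.mp h1).symm
      · rintro ⟨-, h2⟩
        apply Subtype.ext
        show ⁅(x : P), q2⁆ = 1
        exact commutatorElement_eq_one_iff_mul_comm.mpr
          ((Subgroup.mem_centralizer_iff.mp h2 q2 rfl).symm)
    have h1 : Nat.card ↥C1 = Nat.card (↥C1 ⧸ g2.ker) * Nat.card g2.ker :=
      Subgroup.card_eq_card_quotient_mul_card_subgroup g2.ker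
    have h2 : Nat.card (↥C1 ⧸ g2.ker) = Nat.card g2.range :=
      Nat.card_congr (QuotientGroup.quotientKerEquivRange g2).toEquiv
    have h3 : Nat.card g2.range ∣ p := hZcard ▸ Subgroup.card_subgroup_dvd_card g2.range
    have h4 : Nat.card g2.range ≠ 1 := by
      intro h'
      have hb := Subgroup.eq_bot_of_card_eq _ h'
      have hm : g2 ⟨y, hyC1⟩ ∈ g2.range := ⟨_, rfl⟩
      rw [hb, Subgroup.mem_bot] at hm
      have hm' : ⁅y, q2⁆ = 1 := congrArg Subtype.val hm
      have hyq2' := commutatorElement_eq_one_iff_mul_comm.mp hm'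
      refine hyq2 (Subgroup.mem_centralizer_iff.mpr ?_)
      intro h'' hh''; rw [Set.mem_singleton_iff] at hh''; subst hh''
      exact hyq2'.symm
    have h5 : Nat.card g2.range = p := (hp.eq_one_or_self_of_dvd _ h3).resolve_left h4
    have hkercard : Nat.card g2.ker = p ^ 3 := by
      rw [hC14, h2, h5] at h1
      have h6 : p * Nat.card g2.ker = p * p ^ 3 := by rw [← h1]; ring
      exact Nat.eq_of_mul_eq_mul_left hp.pos h6
    have hN0card : Nat.card N0 = p ^ 3 := by
      rw [← Nat.card_congr (Subgroup.subgroupOfEquivOfLe (inf_le_left : N0 ≤ C1)).toEquiv,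
        ← hker2, hkercard]
    have hNeq : (Subgroup.normalizer (Q : Set P)) = N0 := by
      rw [normalizer_eq_centralizer hcommZ hQZ]
      have hQcl : Q = Subgroup.closure {q1, q2} := by
        have hle : Subgroup.closure ({q1, q2} : Set P) ≤ Q := by
          rw [Subgroup.closure_le]
          intro x hx
          rcases Set.mem_insert_iff.mp hx with h | h
          · rw [h]; exact hq1Q
          · rw [Set.mem_singleton_iff.mp h]; exact hq2Q
        have hzle : Subgroup.zpowers q1 ≤ Subgroup.closure ({q1, q2} : Set P) :=
          Subgroup.zpowers_le.mpr (Subgroup.subset_closure (by simp))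
        have hq2cl : q2 ∈ Subgroup.closure ({q1, q2} : Set P) :=
          Subgroup.subset_closure (by simp)
        have hlt : Subgroup.zpowers q1 < Subgroup.closure ({q1, q2} : Set P) :=
          lt_of_le_of_ne hzle (fun h => hq2pow (by rw [h]; exact hq2cl))
        have hcard1 : p < Nat.card (Subgroup.closure ({q1, q2} : Set P)) := by
          have := aux_card_lt hlt
          rwa [Nat.card_zpowers, horder] at this
        have hcard2 : Nat.card (Subgroup.closure ({q1, q2} : Set P)) ≤ p ^ 2 :=
          hQp2 ▸ Subgroup.card_le_of_le hle
        have hdvd : Nat.card (Subgroup.closure ({q1, q2} : Set P)) ∣ p ^ 5 :=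
          hcard ▸ Subgroup.card_subgroup_dvd_card _
        obtain ⟨i, hi5, hiC⟩ := (Nat.dvd_prime_pow hp).mp hdvd
        have hi2 : 2 ≤ i := by
          by_contra h; push_neg at h
          have hle1 : Nat.card (Subgroup.closure ({q1, q2} : Set P)) ≤ p := by
            rw [hiC]
            calc p ^ i ≤ p ^ 1 := Nat.pow_le_pow_right hp.pos (by omega)
              _ = p := pow_one p
          omega
        have hge : p ^ 2 ≤ Nat.card (Subgroup.closure ({q1, q2} : Set P)) := by
          rw [hiC]; exact Nat.pow_le_pow_right hp.pos hi2
        have hcardeq : Nat.card (Subgroup.closure ({q1, q2} : Set P)) = p ^ 2 :=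
          le_antisymm hcard2 hge
        exact (aux_eq_of_le_card hle (by rw [hQp2, hcardeq])).symm
      apply le_antisymm
      · intro x hx
        rw [hN0, Subgroup.mem_inf]
        exact ⟨Subgroup.centralizer_le (Set.singleton_subset_iff.mpr hq1Q) hx,
          Subgroup.centralizer_le (Set.singleton_subset_iff.mpr hq2Q) hx⟩
      · intro x hx
        rw [Subgroup.mem_centralizer_iff]
        intro h hh
        rw [hN0, Subgroup.mem_inf] at hx
        have hc1 : Commute q1 x := (Subgroup.mem_centralizer_iff.mp hx.1) q1 rfl
        have hc2 : Commute q2 x := (Subgroup.mem_centralizer_iff.mp hx.2) q2 rfl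
        have hh' : h ∈ Subgroup.closure ({q1, q2} : Set P) := by
          rw [← hQcl]; exact hh
        show Commute h x
        refine Subgroup.closure_induction ?_ ?_ ?_ ?_ hh'
        · intro g hg
          rcases Set.mem_insert_iff.mp hg with hgg | hgg
          · rw [hgg]; exact hc1
          · rw [Set.mem_singleton_iff.mp hgg]; exact hc2
        · exact Commute.one_left x
        · intro a b _ _ ha hb; exact ha.mul_left hb
        · intro a _ ha; exact ha.inv_left
    have hQN0 : Q ≤ N0 := by
      intro x hx
      rw [hN0, Subgroup.mem_inf]
      constructor
      · rw [hC1, Subgroup.mem_centralizer_iff]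
        intro h hh; rw [Set.mem_singleton_iff] at hh; rw [hh]
        exact congrArg Subtype.val (hQab ⟨q1, hq1Q⟩ ⟨x, hx⟩)
      · rw [Subgroup.mem_centralizer_iff]
        intro h hh; rw [Set.mem_singleton_iff] at hh; rw [hh]
        exact congrArg Subtype.val (hQab ⟨q2, hq2Q⟩ ⟨x, hx⟩)
    haveI hn2 : (Q.subgroupOf N0).Normal := hNeq ▸ Subgroup.normal_in_normalizer
    have hequiv : (↥(Subgroup.normalizer (Q : Set P)) ⧸ Q.subgroupOf (Subgroup.normalizer (Q : Set P))) ≃* (↥N0 ⧸ Q.subgroupOf N0) :=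
      QuotientGroup.congr _ _ (MulEquiv.subgroupCongr hNeq) (map_subgroupOf_eq hNeq)
    have hcardquot : Nat.card (↥(Subgroup.normalizer (Q : Set P)) ⧸ Q.subgroupOf (Subgroup.normalizer (Q : Set P))) = p := by
      rw [Nat.card_congr hequiv.toEquiv]
      have hcq1 : Nat.card ↥N0
          = Nat.card (↥N0 ⧸ Q.subgroupOf N0) * Nat.card (Q.subgroupOf N0) :=
        Subgroup.card_eq_card_quotient_mul_card_subgroup _
      have hcq2 : Nat.card (Q.subgroupOf N0) = p ^ 2 := by
        rw [Nat.card_congr (Subgroup.subgroupOfEquivOfLe hQN0).toEquiv, hQp2]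
      rw [hN0card, hcq2] at hcq1
      have hcq3 : Nat.card (↥N0 ⧸ Q.subgroupOf N0) * p ^ 2 = p * p ^ 2 := by
        rw [← hcq1]; ring
      exact Nat.eq_of_mul_eq_mul_right (pow_pos hp.pos 2) hcq3
    exact ⟨isCyclic_of_prime_card hcardquot, hcardquot⟩
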